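/- For n ∈ ℤ_{≥0} let b(n) be the sum of the digits in the binary representation of n, and set a_n = 2^{b(n)}. Then: (1) the sequence (a_n) is submultiplicative, i.e. a_{m+n} ≤ a_m·a_n for all m, n ≥ 0; (2) a_{2^n − 1} = 2^n and a_{2^n} = 2 for all n ≥ 0; (3) liminf_{n→∞} a_n/n = 0 and limsup_{n→∞} a_n = ∞, so there are no constants α ∈ ℤ_{≥0}, λ ∈ [1,∞) and D > C > 0 with C·n^α·λ^n ≤ a_n ≤ D·n^α·λ^n for all n ≥ 1; and (4) the formal power series ∑_{n≥0} a_n t^n is not a rational function. -/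

import Mathlib

namespace St14

def S (n : ℕ) : ℕ := (Nat.digits 2 n).sum

lemma S_two_mul (m : ℕ) : S (2 * m) = S m := by
  rcases Nat.eq_zero_or_pos m with h | h
  · simp [h, S]
  · unfold S
    rw [Nat.digits_def' (by norm_num : (1:ℕ) < 2) (by omega)]
    simp [Nat.mul_div_cancel_left _ (by norm_num : 0 < 2)]

lemma S_two_mul_add_one (m : ℕ) : S (2 * m + 1) = S m + 1 := by
  unfold S
  rw [Nat.digits_def' (by norm_num : (1:ℕ) < 2) (by omega),
    show (2 * m + 1) % 2 = 1 by omega, show (2 * m + 1) / 2 = m by omega]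
  simp [Nat.add_comm]

lemma S_succ_le (n : ℕ) : S (n + 1) ≤ S n + 1 := by
  induction n using Nat.strong_induction_on with
  | _ n ih =>
    rcases Nat.even_or_odd n with ⟨k, hk⟩ | ⟨k, hk⟩
    · subst hk
      rw [show k + k + 1 = 2 * k + 1 by ring, S_two_mul_add_one,
        show k + k = 2 * k by ring, S_two_mul]
    · subst hk
      rw [show 2 * k + 1 + 1 = 2 * (k + 1) by ring, S_two_mul, S_two_mul_add_one]
      rcases Nat.eq_zero_or_pos k with h | h
      · simp [h, S]
      · have := ih k (by omega)
        omega

lemma S_add_le (m n : ℕ) : S (m + n) ≤ S m + S n := by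
  suffices H : ∀ N, ∀ m n : ℕ, m + n = N → S (m + n) ≤ S m + S n from H (m+n) m n rfl
  intro N
  induction N using Nat.strong_induction_on with
  | _ N ih =>
    intro m n hN
    rcases Nat.even_or_odd m with ⟨p, hp⟩ | ⟨p, hp⟩ <;>
      rcases Nat.even_or_odd n with ⟨q, hq⟩ | ⟨q, hq⟩ <;> subst hp hq
    · rw [show p + p + (q + q) = 2 * (p + q) by ring, S_two_mul,
        show p + p = 2 * p by ring, show q + q = 2 * q by ring, S_two_mul, S_two_mul]
      rcases Nat.eq_zero_or_pos N with h | h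
      · subst h; simp [show p = 0 by omega, show q = 0 by omega]
      · exact ih (p + q) (by omega) p q rfl
    · rw [show p + p + (2 * q + 1) = 2 * (p + q) + 1 by ring, S_two_mul_add_one,
        show p + p = 2 * p by ring, S_two_mul, S_two_mul_add_one]
      rcases Nat.eq_zero_or_pos N with h | h
      · omega
      · have := ih (p + q) (by omega) p q rfl
        omega
    · rw [show 2 * p + 1 + (q + q) = 2 * (p + q) + 1 by ring, S_two_mul_add_one,
        show q + q = 2 * q by ring, S_two_mul, S_two_mul_add_one]
      rcases Nat.eq_zero_or_pos N with h | h
      · omega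
      · have := ih (p + q) (by omega) p q rfl
        omega
    · rw [show 2 * p + 1 + (2 * q + 1) = 2 * (p + q + 1) by ring, S_two_mul,
        S_two_mul_add_one, S_two_mul_add_one]
      have h2 := S_succ_le (p + q)
      have h3 := ih (p + q) (by omega) p q rfl
      omega

lemma S_pow (k : ℕ) : S (2 ^ k) = 1 := by
  induction k with
  | zero => simp [S]
  | succ k ih => rw [pow_succ, mul_comm, S_two_mul, ih]

lemma S_pow_sub_one (k : ℕ) : S (2 ^ k - 1) = k := by
  induction k with
  | zero => simp [S]
  | succ k ih =>
    have h : 2 ^ (k + 1) - 1 = 2 * (2 ^ k - 1) + 1 := by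
      have := Nat.one_le_two_pow (n := k); omega
    rw [h, S_two_mul_add_one, ih]

lemma S_pow_add (k s : ℕ) (hs : s < 2 ^ k) : S (2 ^ k + s) = S s + 1 := by
  induction k generalizing s with
  | zero =>
    interval_cases s
    simp [S]
  | succ k ih =>
    rcases Nat.even_or_odd s with ⟨q, hq⟩ | ⟨q, hq⟩ <;> subst hq
    · rw [show 2 ^ (k + 1) + (q + q) = 2 * (2 ^ k + q) by ring, S_two_mul,
        show q + q = 2 * q by ring, S_two_mul, ih q (by omega)]
    · rw [show 2 ^ (k + 1) + (2 * q + 1) = 2 * (2 ^ k + q) + 1 by ring,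
        S_two_mul_add_one, S_two_mul_add_one, ih q (by omega)]

end St14

open St14 in
theorem statement14 (b : ℕ → ℕ) (hb : ∀ n, b n = (Nat.digits 2 n).sum)
    (a : ℕ → ℕ) (ha : ∀ n, a n = 2 ^ b n) :
    -- (1) submultiplicativity
    (∀ m n : ℕ, a (m + n) ≤ a m * a n) ∧
    -- (2) values at 2^n - 1 and 2^n
    (∀ n : ℕ, a (2 ^ n - 1) = 2 ^ n ∧ a (2 ^ n) = 2) ∧
    -- (3) liminf a_n/n = 0 and limsup a_n = ∞, so no bounds C n^α λ^n ≤ a_n ≤ D n^α λ^n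
    (Filter.liminf (fun n : ℕ => (a n : ℝ) / (n : ℝ)) Filter.atTop = 0) ∧
    (∀ M : ℝ, ∃ᶠ n : ℕ in Filter.atTop, M ≤ (a n : ℝ)) ∧
    (¬ ∃ (α : ℕ) (lam C D : ℝ), 1 ≤ lam ∧ 0 < C ∧ C < D ∧
      ∀ n : ℕ, 1 ≤ n →
        C * (n : ℝ) ^ α * lam ^ n ≤ (a n : ℝ) ∧ (a n : ℝ) ≤ D * (n : ℝ) ^ α * lam ^ n) ∧
    -- (4) the power series ∑ a_n t^n is not rational
    ¬ ∃ p q : Polynomial ℝ, q ≠ 0 ∧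
      (q : PowerSeries ℝ) * PowerSeries.mk (fun n => (a n : ℝ)) = (p : PowerSeries ℝ) := by
  have hA : ∀ n, a n = 2 ^ S n := fun n => by rw [ha, hb]; rfl
  -- part 1
  have part1 : ∀ m n : ℕ, a (m + n) ≤ a m * a n := by
    intro m n
    rw [hA, hA, hA, ← pow_add]
    exact Nat.pow_le_pow_right (by norm_num) (S_add_le m n)
  -- part 2
  have part2 : ∀ n : ℕ, a (2 ^ n - 1) = 2 ^ n ∧ a (2 ^ n) = 2 := by
    intro n
    rw [hA, hA, S_pow, S_pow_sub_one]
    exact ⟨rfl, rfl⟩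
  -- part 3b
  have part3b : ∀ M : ℝ, ∃ᶠ n : ℕ in Filter.atTop, M ≤ (a n : ℝ) := by
    intro M
    rw [Filter.frequently_atTop]
    intro N
    obtain ⟨k, hk⟩ : ∃ k : ℕ, N + Nat.ceil M < 2 ^ k := ⟨N + Nat.ceil M, Nat.lt_two_pow_self⟩
    refine ⟨2 ^ k - 1, by omega, ?_⟩
    rw [(part2 k).1]
    have h1 : (Nat.ceil M : ℕ) ≤ 2 ^ k := by omega
    calc M ≤ (Nat.ceil M : ℝ) := Nat.le_ceil M
      _ ≤ ((2 ^ k : ℕ) : ℝ) := Nat.cast_le.2 h1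
  -- part 3a
  have key : ∀ k : ℕ, ((a (2 ^ k) : ℝ)) / ((2 ^ k : ℕ) : ℝ) = 2 / (2 : ℝ) ^ k := by
    intro k; rw [(part2 k).2]; push_cast; ring_nf
  have part3a : Filter.liminf (fun n : ℕ => (a n : ℝ) / (n : ℝ)) Filter.atTop = 0 := by
    have hnonneg : ∀ n : ℕ, 0 ≤ (a n : ℝ) / (n : ℝ) := fun n => by positivity
    have hbdd : Filter.IsBoundedUnder (· ≥ ·) Filter.atTop
        (fun n : ℕ => (a n : ℝ) / (n : ℝ)) := Filter.isBoundedUnder_of ⟨0, fun n => hnonneg n⟩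
    have hcobdd : Filter.IsCoboundedUnder (· ≥ ·) Filter.atTop
        (fun n : ℕ => (a n : ℝ) / (n : ℝ)) := by
      apply Filter.IsCoboundedUnder.of_frequently_le (a := 2)
      rw [Filter.frequently_atTop]
      intro N
      obtain ⟨k, hk⟩ : ∃ k : ℕ, N < 2 ^ k := ⟨N, Nat.lt_two_pow_self⟩
      refine ⟨2 ^ k, by omega, ?_⟩
      rw [key k]
      have h1 : (1:ℝ) ≤ 2 ^ k := one_le_pow₀ (by norm_num)
      rw [div_le_iff₀ (by linarith)]; nlinarith
    refine le_antisymm ?_ (Filter.le_liminf_of_le hcobdd (Filter.Eventually.of_forall hnonneg))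
    refine le_of_forall_pos_le_add ?_
    intro ε hε
    rw [zero_add]
    apply Filter.liminf_le_of_frequently_le _ hbdd
    rw [Filter.frequently_atTop]
    intro N
    obtain ⟨k, hk⟩ : ∃ k : ℕ, N + Nat.ceil (2/ε) < 2 ^ k := ⟨_, Nat.lt_two_pow_self⟩
    refine ⟨2 ^ k, by omega, ?_⟩
    rw [key k]
    have h0 : (Nat.ceil (2/ε) : ℕ) ≤ 2 ^ k := by omega
    have h1 : (2:ℝ)/ε ≤ 2 ^ k := by
      calc (2:ℝ)/ε ≤ (Nat.ceil (2/ε) : ℝ) := Nat.le_ceil _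
        _ ≤ ((2 ^ k : ℕ):ℝ) := Nat.cast_le.2 h0
        _ = (2:ℝ) ^ k := by push_cast; ring
    rw [div_le_iff₀ (by positivity)]
    rw [div_le_iff₀ hε] at h1
    nlinarith
  -- part 3c
  have part3c : ¬ ∃ (α : ℕ) (lam C D : ℝ), 1 ≤ lam ∧ 0 < C ∧ C < D ∧
      ∀ n : ℕ, 1 ≤ n →
        C * (n : ℝ) ^ α * lam ^ n ≤ (a n : ℝ) ∧ (a n : ℝ) ≤ D * (n : ℝ) ^ α * lam ^ n := by
    rintro ⟨α, lam, C, D, hlam, hC, hCD, hbound⟩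
    have hD : 0 < D := lt_trans hC hCD
    obtain ⟨k, hk⟩ := pow_unbounded_of_one_lt (2 * D / C) (by norm_num : (1:ℝ) < 2)
    set K := k + 1 with hK
    have h2K : 2 ≤ 2 ^ K := by
      calc 2 = 2 ^ 1 := rfl
        _ ≤ 2 ^ K := Nat.pow_le_pow_right (by norm_num) (by omega)
    have hn1 : 1 ≤ 2 ^ K - 1 := by omega
    have hn2 : 1 ≤ 2 ^ K := by omega
    obtain ⟨_, hupper⟩ := hbound (2 ^ K - 1) hn1
    obtain ⟨hlower, _⟩ := hbound (2 ^ K) hn2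
    rw [(part2 K).1] at hupper
    rw [(part2 K).2] at hlower
    have hcast : ((2 ^ K : ℕ) : ℝ) = (2:ℝ) ^ K := by push_cast; ring
    push_cast at hlower
    rw [← hcast] at hlower
    have e1 : ((2 ^ K - 1 : ℕ) : ℝ) ≤ ((2 ^ K : ℕ) : ℝ) := Nat.cast_le.2 (Nat.sub_le _ _)
    have e0 : (0:ℝ) ≤ ((2 ^ K - 1 : ℕ) : ℝ) := Nat.cast_nonneg _
    have hpa : ((2 ^ K - 1 : ℕ) : ℝ) ^ α ≤ ((2 ^ K : ℕ) : ℝ) ^ α := pow_le_pow_left₀ e0 e1 α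
    have hpl : lam ^ (2 ^ K - 1) ≤ lam ^ (2 ^ K) := pow_le_pow_right₀ hlam (by omega)
    have hlampos : (0:ℝ) < lam ^ (2 ^ K) := by positivity
    have hnpos : (0:ℝ) < ((2 ^ K : ℕ) : ℝ) ^ α := by positivity
    have hchain : ((2 ^ K : ℕ) : ℝ) ≤ D * ((2 ^ K : ℕ) : ℝ) ^ α * lam ^ (2 ^ K) := by
      calc ((2 ^ K : ℕ) : ℝ)
          ≤ D * ((2 ^ K - 1 : ℕ) : ℝ) ^ α * lam ^ (2 ^ K - 1) := hupper
        _ ≤ D * ((2 ^ K : ℕ) : ℝ) ^ α * lam ^ (2 ^ K) := by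
            apply mul_le_mul (mul_le_mul le_rfl hpa (by positivity) hD.le) hpl (by positivity)
            positivity
    -- from hlower : C * n2^α * lam^n2 ≤ 2, deduce n2^α * lam^n2 ≤ 2 / C
    have hsmall : ((2 ^ K : ℕ) : ℝ) ^ α * lam ^ (2 ^ K) ≤ 2 / C := by
      rw [le_div_iff₀ hC]; nlinarith [hlower]
    have hfinal : ((2 ^ K : ℕ) : ℝ) ≤ 2 * D / C := by
      calc ((2 ^ K : ℕ) : ℝ) ≤ D * (((2 ^ K : ℕ) : ℝ) ^ α * lam ^ (2 ^ K)) := by linarith [hchain]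
        _ ≤ D * (2 / C) := by apply mul_le_mul_of_nonneg_left hsmall hD.le
        _ = 2 * D / C := by ring
    have hKk : (2:ℝ) ^ k ≤ (2:ℝ) ^ K := by
      apply pow_le_pow_right₀ (by norm_num); omega
    rw [hcast] at hfinal
    linarith
  have part4 : ¬ ∃ p q : Polynomial ℝ, q ≠ 0 ∧
      (q : PowerSeries ℝ) * PowerSeries.mk (fun n => (a n : ℝ)) = (p : PowerSeries ℝ) := by
    rintro ⟨p, q, hq, hqa⟩
    set A : ℕ → ℝ := fun n => (a n : ℝ) with hAdef
    set j := q.natTrailingDegree with hj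
    set D := q.natDegree with hD
    have hjD : j ≤ D := Polynomial.natTrailingDegree_le_natDegree q
    have hqj : q.coeff j ≠ 0 := Polynomial.trailingCoeff_nonzero_iff_nonzero.2 hq
    -- the recurrence from the power series identity
    have hrec : ∀ n : ℕ, p.natDegree < n →
        ∑ i ∈ Finset.range (n + 1), q.coeff i * A (n - i) = 0 := by
      intro n hn
      have h1 := congrArg (PowerSeries.coeff (R := ℝ) n) hqa
      rw [PowerSeries.coeff_mul] at h1
      rw [Finset.Nat.sum_antidiagonal_eq_sum_range_succ_mk] at h1
      simp only [Polynomial.coeff_coe, PowerSeries.coeff_mk] at h1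
      rw [h1]
      exact Polynomial.coeff_eq_zero_of_natDegree_lt hn
    have hrec2 : ∀ n : ℕ, p.natDegree < n → D ≤ n →
        ∑ i ∈ Finset.Icc j D, q.coeff i * A (n - i) = 0 := by
      intro n hn hDn
      rw [← hrec n hn]
      apply Finset.sum_subset
      · intro i hi
        simp only [Finset.mem_Icc] at hi
        simp only [Finset.mem_range]
        omega
      · intro i hi hnot
        simp only [Finset.mem_range] at hi
        simp only [Finset.mem_Icc, not_and_or, not_le] at hnot
        rcases hnot with h | h
        · rw [Polynomial.coeff_eq_zero_of_lt_natTrailingDegree h, zero_mul]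
        · rw [Polynomial.coeff_eq_zero_of_natDegree_lt h, zero_mul]
    set M₀ := p.natDegree + D + 1 with hM0
    set d := D - j with hd
    -- determination lemma
    have det : ∀ n1 n2 : ℕ, M₀ ≤ n1 → M₀ ≤ n2 →
        (∀ s : ℕ, s < d → A (n1 + s) = A (n2 + s)) →
        ∀ t : ℕ, A (n1 + t) = A (n2 + t) := by
      intro n1 n2 h1 h2 hwin t
      induction t using Nat.strong_induction_on with
      | _ t ih =>
        rcases lt_or_ge t d with ht | ht
        · exact hwin t ht
        · -- use the recurrences at n1 + t + j and n2 + t + j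
          have key : ∀ m : ℕ, M₀ ≤ m →
              q.coeff j * A (m + t) = - ∑ i ∈ Finset.Icc j D \ {j}, q.coeff i * A (m + t + j - i) := by
            intro m hm
            have h0 := hrec2 (m + t + j) (by omega) (by omega)
            have hmem : j ∈ Finset.Icc j D := Finset.mem_Icc.2 ⟨le_rfl, hjD⟩
            rw [Finset.sum_eq_sum_sdiff_singleton_add hmem] at h0
            rw [show m + t + j - j = m + t by omega] at h0
            linarith [h0]
          have e1 := key n1 h1
          have e2 := key n2 h2
          have esum : ∑ i ∈ Finset.Icc j D \ {j}, q.coeff i * A (n1 + t + j - i)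
              = ∑ i ∈ Finset.Icc j D \ {j}, q.coeff i * A (n2 + t + j - i) := by
            apply Finset.sum_congr rfl
            intro i hi
            simp only [Finset.mem_sdiff, Finset.mem_Icc, Finset.mem_singleton] at hi
            have hij : j < i := lt_of_le_of_ne hi.1.1 (Ne.symm hi.2)
            have hiD : i ≤ D := hi.1.2
            have h3 : n1 + t + j - i = n1 + (t - (i - j)) := by omega
            have h4 : n2 + t + j - i = n2 + (t - (i - j)) := by omega
            rw [h3, h4, ih (t - (i - j)) (by omega)]
          rw [esum] at e1
          rw [← e2] at e1
          exact mul_left_cancel₀ hqj e1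
    -- choose K large and derive contradiction
    set K := M₀ + d with hK
    have hKlt : M₀ + d < 2 ^ K := Nat.lt_two_pow_self
    have hwin : ∀ s : ℕ, s < d → A (2 ^ K + s) = A (2 ^ (K + 1) + s) := by
      intro s hs
      have e1 : a (2 ^ K + s) = 2 ^ (S s + 1) := by rw [hA, S_pow_add K s (by omega)]
      have e2 : a (2 ^ (K + 1) + s) = 2 ^ (S s + 1) := by
        rw [hA, S_pow_add (K + 1) s (by calc s < 2 ^ K := by omega
          _ ≤ 2 ^ (K + 1) := Nat.pow_le_pow_right (by norm_num) (by omega))]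
      simp only [hAdef, e1, e2]
    have hfin := det (2 ^ K) (2 ^ (K + 1)) (by omega)
      (by calc M₀ ≤ 2 ^ K := by omega
        _ ≤ 2 ^ (K + 1) := Nat.pow_le_pow_right (by norm_num) (by omega)) hwin (2 ^ K)
    have lhs : a (2 ^ K + 2 ^ K) = 2 := by
      rw [show 2 ^ K + 2 ^ K = 2 ^ (K + 1) by ring, hA, S_pow]; norm_num
    have rhs : a (2 ^ (K + 1) + 2 ^ K) = 4 := by
      rw [hA, S_pow_add (K + 1) (2 ^ K)
        (Nat.pow_lt_pow_right (by norm_num) (by omega)), S_pow]; norm_num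
    simp only [hAdef, lhs, rhs] at hfin
    norm_num at hfin
  exact ⟨part1, part2, part3a, part3b, part3c, part4⟩
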